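/- Off-diagonal Gram perturbation bound: if E_k = [e_1 … e_k] has columns satisfying ‖e_i‖₂² ≤ 1+α and |e_i^T e_j| ≤ (1+α)μ(S_i,S_j) for i ≠ j (with e_i ∈ S_i), then writing E_k^T E_k = I_k + D one has ‖D‖_{1,1} ≤ α + (1+α)ζ_{k−1}, where ζ_{k−1} is the (k−1)-cumulative subspace coherence. -/

import Mathlib

open scoped BigOperators

/-- The subspace coherence of two subspaces of `R^D`. -/
noncomputable def subCoh {D : ℕ} (S T : Submodule ℝ (EuclideanSpace ℝ (Fin D))) : ℝ :=
  sSup {r : ℝ | ∃ x ∈ S, ∃ z ∈ T, x ≠ 0 ∧ z ≠ 0 ∧ r = |(inner ℝ x z : ℝ)| / (‖x‖ * ‖z‖)}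

/-- The `k`-cumulative subspace coherence `ζ_k` of a collection of subspaces. -/
noncomputable def zeta {D n : ℕ} (S : Fin n → Submodule ℝ (EuclideanSpace ℝ (Fin D)))
    (k : ℕ) : ℝ :=
  sSup {r : ℝ | ∃ (Λ : Finset (Fin n)) (i : Fin n),
    Λ.card = k ∧ i ∉ Λ ∧ r = ∑ j ∈ Λ, subCoh (S i) (S j)}

/-- The mutual subspace coherence `μ_S` of a collection of subspaces. -/
noncomputable def muS {D n : ℕ} (S : Fin n → Submodule ℝ (EuclideanSpace ℝ (Fin D))) : ℝ :=
  sSup {r : ℝ | ∃ i j : Fin n, i ≠ j ∧ r = subCoh (S i) (S j)}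

/-- The `ℓ₁`-induced operator norm of a matrix: the maximum column `ℓ₁` norm. -/
noncomputable def norm11 {α β : Type*} [Fintype α] (M : Matrix α β ℝ) : ℝ :=
  sSup {r : ℝ | ∃ j : β, r = ∑ i, |M i j|}

lemma subCoh_nonneg {D : ℕ} (S T : Submodule ℝ (EuclideanSpace ℝ (Fin D))) :
    0 ≤ subCoh S T := by
  apply Real.sSup_nonneg
  rintro r ⟨x, hx, z, hz, hx0, hz0, rfl⟩
  positivity

lemma subCoh_comm {D : ℕ} (S T : Submodule ℝ (EuclideanSpace ℝ (Fin D))) :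
    subCoh S T = subCoh T S := by
  unfold subCoh
  congr 1
  ext r
  constructor <;> rintro ⟨x, hx, z, hz, hx0, hz0, rfl⟩ <;>
    exact ⟨z, hz, x, hx, hz0, hx0, by rw [real_inner_comm, mul_comm]⟩

lemma zeta_bddAbove {D n : ℕ} (S : Fin n → Submodule ℝ (EuclideanSpace ℝ (Fin D))) (k : ℕ) :
    BddAbove {r : ℝ | ∃ (Λ : Finset (Fin n)) (i : Fin n),
      Λ.card = k ∧ i ∉ Λ ∧ r = ∑ j ∈ Λ, subCoh (S i) (S j)} := by
  apply Set.Finite.bddAbove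
  apply Set.Finite.subset (Set.finite_range
    (fun p : Finset (Fin n) × Fin n => ∑ j ∈ p.1, subCoh (S p.2) (S j)))
  rintro r ⟨Λ, i, _, _, rfl⟩
  exact ⟨(Λ, i), rfl⟩

lemma zeta_nonneg {D n : ℕ} (S : Fin n → Submodule ℝ (EuclideanSpace ℝ (Fin D))) (k : ℕ) :
    0 ≤ zeta S k := by
  apply Real.sSup_nonneg
  rintro r ⟨Λ, i, _, _, rfl⟩
  exact Finset.sum_nonneg fun j _ => subCoh_nonneg _ _

lemma le_zeta {D n : ℕ} (S : Fin n → Submodule ℝ (EuclideanSpace ℝ (Fin D))) {k : ℕ}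
    {Λ : Finset (Fin n)} {i : Fin n} (hc : Λ.card = k) (hi : i ∉ Λ) :
    ∑ j ∈ Λ, subCoh (S i) (S j) ≤ zeta S k :=
  le_csSup (zeta_bddAbove S k) ⟨Λ, i, hc, hi, rfl⟩

/-- writing `E_kᵀE_k = I + D`, one has `‖D‖_{1,1} ≤ α + (1+α)ζ_{k−1}`. -/
theorem gram_perturbation_bound {Dim n k : ℕ} (α : ℝ) (hα0 : 0 ≤ α) (hα1 : α < 1)
    (S : Fin n → Submodule ℝ (EuclideanSpace ℝ (Fin Dim)))
    (Λ : Finset (Fin n)) (hΛ : Λ.card = k)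
    (e : Fin n → EuclideanSpace ℝ (Fin Dim))
    (he : ∀ i ∈ Λ, e i ∈ S i)
    (hnorm : ∀ i ∈ Λ, 1 - α ≤ ‖e i‖ ^ 2 ∧ ‖e i‖ ^ 2 ≤ 1 + α)
    (hcross : ∀ i ∈ Λ, ∀ j ∈ Λ, i ≠ j →
      |(inner ℝ (e i) (e j) : ℝ)| ≤ (1 + α) * subCoh (S i) (S j)) :
    norm11 ((Matrix.of fun (i j : {i // i ∈ Λ}) => (inner ℝ (e i.1) (e j.1) : ℝ)) - 1) ≤
      α + (1 + α) * zeta S (k - 1) := by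
  have hrhs : 0 ≤ α + (1 + α) * zeta S (k - 1) := by
    have := zeta_nonneg S (k - 1)
    nlinarith
  apply Real.sSup_le _ hrhs
  rintro r ⟨j, rfl⟩
  -- rewrite the column sum as a sum over Λ
  set f : Fin n → ℝ :=
    fun i => |(inner ℝ (e i) (e j.1) : ℝ) - (if i = j.1 then 1 else 0)| with hf
  have hcol : ∑ i : {i // i ∈ Λ},
      |((Matrix.of fun (i j : {i // i ∈ Λ}) => (inner ℝ (e i.1) (e j.1) : ℝ)) - 1) i j|
      = ∑ i ∈ Λ, f i := by
    rw [← Finset.sum_coe_sort Λ f]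
    apply Finset.sum_congr rfl
    intro i _
    simp only [Matrix.sub_apply, Matrix.of_apply, Matrix.one_apply, hf]
    congr 1
    congr 1
    exact if_congr Subtype.ext_iff rfl rfl
  rw [hcol]
  have hjΛ : j.1 ∈ Λ := j.2
  rw [← Finset.add_sum_erase _ f hjΛ]
  have hdiag : f j.1 ≤ α := by
    have h := hnorm j.1 hjΛ
    have hself : (inner ℝ (e j.1) (e j.1) : ℝ) = ‖e j.1‖ ^ 2 :=
      real_inner_self_eq_norm_sq _
    simp only [hf, if_pos rfl, hself]
    rw [abs_le]
    norm_num
    constructor <;> linarith [h.1, h.2]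
  have hoff : ∑ i ∈ Λ.erase j.1, f i ≤ (1 + α) * zeta S (k - 1) := by
    have hstep : ∑ i ∈ Λ.erase j.1, f i
        ≤ ∑ i ∈ Λ.erase j.1, (1 + α) * subCoh (S j.1) (S i) := by
      apply Finset.sum_le_sum
      intro i hi
      have hiΛ : i ∈ Λ := Finset.mem_of_mem_erase hi
      have hij : i ≠ j.1 := Finset.ne_of_mem_erase hi
      have := hcross i hiΛ j.1 hjΛ hij
      simp only [hf, if_neg hij, sub_zero]
      rw [subCoh_comm]
      exact this
    refine hstep.trans ?_
    rw [← Finset.mul_sum]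
    apply mul_le_mul_of_nonneg_left _ (by linarith)
    have hcard : (Λ.erase j.1).card = k - 1 := by
      rw [Finset.card_erase_of_mem hjΛ, hΛ]
    exact le_zeta S hcard (Finset.notMem_erase _ _)
  linarith
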